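/- arXiv:1808.04747 — 2 statements merged into one kernel-verified Lean document; each statement's English description precedes it below -/
import Mathlib

section
/- Convergence of the iterated optimal stopping approximation: let c > 0 and let (u^n)_{n≥0} be the iterated optimal stopping sequence for switching cost c. Then ‖u^n‖ ≤ ‖F(0)‖/γ for all n ≥ 0, the sequence is componentwise nondecreasing (u^n ≤ u^{n+1} for all n), and u^n converges componentwise as n → ∞ to the solution u of the QVI with switching cost c. -/
open Filter Topology

noncomputable section

/-- A monotone system with constant `γ`: whenever `u i l - v i l` is the (nonnegative)
maximum of all differences, `F u i l - F v i l ≥ γ (u i l - v i l)`. -/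
def IsMonotoneSystem {N d : ℕ} (γ : ℝ)
    (F : (Fin d → Fin N → ℝ) → Fin d → Fin N → ℝ) : Prop :=
  ∀ u v : Fin d → Fin N → ℝ, ∀ i : Fin d, ∀ l : Fin N,
    (∀ (j : Fin d) (k : Fin N), u j k - v j k ≤ u i l - v i l) →
    0 ≤ u i l - v i l →
    γ * (u i l - v i l) ≤ F u i l - F v i l

/-- The intervention operator `(M_i u)_l = max_{j ≠ i} (u j l - c)`. -/
def Mop {N d : ℕ} (c : ℝ) (u : Fin d → Fin N → ℝ) (i : Fin d) (l : Fin N) : ℝ :=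
  ⨆ j : {j : Fin d // j ≠ i}, (u j l - c)

/-- The sup-norm `‖u‖ = max_{i,l} |u i l|`. -/
def supNorm {N d : ℕ} (u : Fin d → Fin N → ℝ) : ℝ :=
  ⨆ p : Fin d × Fin N, |u p.1 p.2|

/-- A penalty function: continuous, non-decreasing, vanishing on `(-∞,0]` and
positive on `(0,∞)`. -/
def IsPenaltyFunction (π : ℝ → ℝ) : Prop :=
  Continuous π ∧ Monotone π ∧ (∀ y : ℝ, y ≤ 0 → π y = 0) ∧ (∀ y : ℝ, 0 < y → 0 < π y)

/-- A concave system: each `F_i` is concave (componentwise). -/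
def IsConcaveSystem {N d : ℕ}
    (F : (Fin d → Fin N → ℝ) → Fin d → Fin N → ℝ) : Prop :=
  ∀ (i : Fin d) (u v : Fin d → Fin N → ℝ) (θ : ℝ), 0 ≤ θ → θ ≤ 1 → ∀ l : Fin N,
    θ * F u i l + (1 - θ) * F v i l ≤ F (fun j k => θ * u j k + (1 - θ) * v j k) i l

/-! ### Auxiliary lemmas -/

lemma nonempty_ne_sub {d : ℕ} (hd : 2 ≤ d) (i : Fin d) : Nonempty {j : Fin d // j ≠ i} := by
  by_cases h : i = (⟨0, by omega⟩ : Fin d)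
  · exact ⟨⟨⟨1, by omega⟩, by simp [h, Fin.ext_iff]⟩⟩
  · exact ⟨⟨⟨0, by omega⟩, fun he => h (he ▸ rfl)⟩⟩

lemma le_Mop {N d : ℕ} (c : ℝ) (u : Fin d → Fin N → ℝ) {i j : Fin d} (hj : j ≠ i) (l : Fin N) :
    u j l - c ≤ Mop c u i l :=
  le_ciSup (f := fun j : {j : Fin d // j ≠ i} => u j l - c)
    (Set.Finite.bddAbove (Set.finite_range _)) ⟨j, hj⟩

lemma Mop_le {N d : ℕ} (hd : 2 ≤ d) (c : ℝ) (u : Fin d → Fin N → ℝ) (i : Fin d) (l : Fin N)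
    {x : ℝ} (h : ∀ j : Fin d, j ≠ i → u j l - c ≤ x) : Mop c u i l ≤ x := by
  haveI := nonempty_ne_sub hd i
  exact ciSup_le fun j => h j.1 j.2

lemma Mop_mono {N d : ℕ} (hd : 2 ≤ d) (c : ℝ) {u v : Fin d → Fin N → ℝ}
    (h : ∀ j l, u j l ≤ v j l) (i : Fin d) (l : Fin N) : Mop c u i l ≤ Mop c v i l :=
  Mop_le hd c u i l fun j hj => le_trans (by linarith [h j l]) (le_Mop c v hj l)

lemma exists_Mop_eq {N d : ℕ} (hd : 2 ≤ d) (c : ℝ) (u : Fin d → Fin N → ℝ) (i : Fin d)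
    (l : Fin N) : ∃ j : Fin d, j ≠ i ∧ Mop c u i l = u j l - c := by
  haveI := nonempty_ne_sub hd i
  obtain ⟨j, hj⟩ := exists_eq_ciSup_of_finite (f := fun j : {j : Fin d // j ≠ i} => u j l - c)
  exact ⟨j.1, j.2, hj.symm⟩

lemma min_facts {a b : ℝ} (h : min a b = 0) : 0 ≤ a ∧ 0 ≤ b ∧ (a = 0 ∨ b = 0) := by
  refine ⟨h ▸ min_le_left a b, h ▸ min_le_right a b, ?_⟩
  rcases le_total a b with hab | hab
  · left; rw [min_eq_left hab] at h; exact h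
  · right; rw [min_eq_right hab] at h; exact h

/-- Core comparison principle skeleton. -/
lemma comp_main {N d : ℕ} (hN : 1 ≤ N) (hd : 2 ≤ d) (a b : Fin d → Fin N → ℝ)
    (H : ∀ i l, (∀ j k, a j k - b j k ≤ a i l - b i l) → 0 < a i l - b i l → False) :
    ∀ i l, a i l ≤ b i l := by
  haveI : Nonempty (Fin d) := ⟨⟨0, by omega⟩⟩
  haveI : Nonempty (Fin N) := ⟨⟨0, by omega⟩⟩
  obtain ⟨p, hp⟩ := Finite.exists_max (fun p : Fin d × Fin N => a p.1 p.2 - b p.1 p.2)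
  intro i l
  by_contra hcon
  push_neg at hcon
  have hpos : 0 < a p.1 p.2 - b p.1 p.2 := lt_of_lt_of_le (by linarith) (hp (i, l))
  exact H p.1 p.2 (fun j k => hp (j, k)) hpos

/-- Comparison principle for the QVI with positive switching cost. -/
lemma qvi_comp {N d : ℕ} (hN : 1 ≤ N) (hd : 2 ≤ d) (γ : ℝ) (hγ : 0 < γ)
    (F : (Fin d → Fin N → ℝ) → Fin d → Fin N → ℝ) (hFmono : IsMonotoneSystem γ F)
    (c : ℝ) (hc : 0 < c) (a b : Fin d → Fin N → ℝ)
    (ha : ∀ i l, min (F a i l) (a i l - Mop c a i l) = 0)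
    (hb : ∀ i l, min (F b i l) (b i l - Mop c b i l) = 0) :
    ∀ i l, a i l ≤ b i l := by
  haveI : Nonempty (Fin d) := ⟨⟨0, by omega⟩⟩
  haveI : Nonempty (Fin N) := ⟨⟨0, by omega⟩⟩
  set f : Fin d × Fin N → ℝ := fun p => a p.1 p.2 - b p.1 p.2 with hf
  obtain ⟨p0, hp0⟩ := Finite.exists_max f
  intro i0 l0
  by_contra hcon
  push_neg at hcon
  have hp0pos : 0 < f p0 := lt_of_lt_of_le (by simp only [hf]; linarith) (hp0 (i0, l0))
  set T : Finset (Fin d × Fin N) := Finset.univ.filter (fun p => ∀ q, f q ≤ f p) with hT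
  have hp0T : p0 ∈ T := by simp [hT, hp0]
  obtain ⟨p, hpT, hpmax⟩ := T.exists_max_image (fun p => a p.1 p.2) ⟨p0, hp0T⟩
  have hpmaxf : ∀ q, f q ≤ f p := by
    simp only [hT, Finset.mem_filter] at hpT; exact hpT.2
  have hMpos : 0 < f p := lt_of_lt_of_le hp0pos (hpmaxf p0)
  set i := p.1; set l := p.2
  have hγM : γ * (a i l - b i l) ≤ F a i l - F b i l :=
    hFmono a b i l (fun j k => hpmaxf (j, k)) (le_of_lt hMpos)
  have hbfacts := min_facts (hb i l)
  have hafacts := min_facts (ha i l)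
  have hM' : 0 < a i l - b i l := hMpos
  rcases hafacts.2.2 with h0 | h0
  · nlinarith [hbfacts.1, mul_pos hγ hM']
  · -- a i l = Mop c a i l
    obtain ⟨j, hji, hjeq⟩ := exists_Mop_eq hd c a i l
    have haj : a j l = a i l + c := by
      have : a i l = a j l - c := by linarith [hjeq]
      linarith
    have hbj : b j l - c ≤ b i l := le_trans (le_Mop c b hji l) (by linarith [hbfacts.2.1])
    have hfj : f p ≤ f (j, l) := by simp only [hf]; linarith
    have hjT : (j, l) ∈ T := by
      simp only [hT, Finset.mem_filter, Finset.mem_univ, true_and]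
      exact fun q => le_trans (hpmaxf q) hfj
    have := hpmax (j, l) hjT
    simp only at this
    linarith

/-- Convergence of the iterated optimal stopping approximation: uniform bound,
monotonicity, and convergence to the QVI solution. -/
theorem iterated_optimal_stopping_convergence {N d : ℕ} (hN : 1 ≤ N) (hd : 2 ≤ d)
    (γ : ℝ) (hγ : 0 < γ)
    (F : (Fin d → Fin N → ℝ) → Fin d → Fin N → ℝ)
    (hFcont : Continuous F) (hFmono : IsMonotoneSystem γ F)
    (c : ℝ) (hc : 0 < c)
    (U : ℕ → Fin d → Fin N → ℝ)
    (hU0 : ∀ i l, F (U 0) i l = 0)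
    (hUn : ∀ n : ℕ, ∀ i l, min (F (U (n + 1)) i l) (U (n + 1) i l - Mop c (U n) i l) = 0)
    (u : Fin d → Fin N → ℝ)
    (hu : ∀ i l, min (F u i l) (u i l - Mop c u i l) = 0) :
    (∀ n : ℕ, supNorm (U n) ≤ supNorm (F 0) / γ) ∧
    (∀ n : ℕ, ∀ i l, U n i l ≤ U (n + 1) i l) ∧
    (∀ i l, Filter.Tendsto (fun n => U n i l) Filter.atTop (nhds (u i l))) := by
  haveI : Nonempty (Fin d) := ⟨⟨0, by omega⟩⟩
  haveI : Nonempty (Fin N) := ⟨⟨0, by omega⟩⟩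
  set K : ℝ := supNorm (F 0) / γ with hK
  have habs : ∀ (v : Fin d → Fin N → ℝ) i l, |v i l| ≤ supNorm v := fun v i l =>
    le_ciSup (f := fun p : Fin d × Fin N => |v p.1 p.2|)
      (Set.Finite.bddAbove (Set.finite_range _)) (i, l)
  have hsn0 : 0 ≤ supNorm (F 0) :=
    le_trans (abs_nonneg _) (habs (F 0) (Classical.arbitrary _) (Classical.arbitrary _))
  have hK0 : 0 ≤ K := div_nonneg hsn0 hγ.le
  have hγK : γ * K = supNorm (F 0) := by rw [hK]; field_simp [hγ.ne']
  -- F of constants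
  have hFKpos : ∀ i l, 0 ≤ F (fun _ _ => K) i l := by
    intro i l
    have := hFmono (fun _ _ => K) 0 i l (fun j k => by simp) (by simpa using hK0)
    have h1 := (abs_le.mp (habs (F 0) i l)).1
    simp only [Pi.zero_apply] at this ⊢
    nlinarith
  have hFmKneg : ∀ i l, F (fun _ _ => -K) i l ≤ 0 := by
    intro i l
    have := hFmono 0 (fun _ _ => -K) i l (fun j k => by simp) (by simpa using hK0)
    have h1 := (abs_le.mp (habs (F 0) i l)).2
    simp only [Pi.zero_apply] at this ⊢
    nlinarith
  -- upper bound by K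
  have hupper : ∀ n i l, U n i l ≤ K := by
    intro n
    induction n with
    | zero =>
      refine comp_main hN hd _ _ (fun i l hmax hpos => ?_)
      have := hFmono (U 0) (fun _ _ => K) i l hmax hpos.le
      rw [hU0 i l] at this
      nlinarith [hFKpos i l]
    | succ n ih =>
      refine comp_main hN hd _ _ (fun i l hmax hpos => ?_)
      have hfacts := min_facts (hUn n i l)
      rcases hfacts.2.2 with h0 | h0
      · have := hFmono (U (n + 1)) (fun _ _ => K) i l hmax hpos.le
        rw [h0] at this
        nlinarith [hFKpos i l]
      · have hM : Mop c (U n) i l ≤ K - c :=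
          Mop_le hd c (U n) i l fun j hj => by linarith [ih j l]
        have : U (n + 1) i l = Mop c (U n) i l := by linarith
        linarith
  -- lower bound for U 0
  have hlower0 : ∀ i l, -K ≤ U 0 i l := by
    intro i l
    refine comp_main hN hd (fun _ _ => -K) (U 0) (fun i l hmax hpos => ?_) i l
    have := hFmono (fun _ _ => -K) (U 0) i l hmax hpos.le
    rw [hU0 i l] at this
    nlinarith [hFmKneg i l]
  -- monotonicity
  have hmono : ∀ n i l, U n i l ≤ U (n + 1) i l := by
    intro n
    induction n with
    | zero =>
      refine comp_main hN hd _ _ (fun i l hmax hpos => ?_)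
      have := hFmono (U 0) (U 1) i l hmax hpos.le
      rw [hU0 i l] at this
      have h1 := (min_facts (hUn 0 i l)).1
      nlinarith
    | succ n ih =>
      refine comp_main hN hd _ _ (fun i l hmax hpos => ?_)
      have hfacts := min_facts (hUn n i l)
      rcases hfacts.2.2 with h0 | h0
      · have := hFmono (U (n + 1)) (U (n + 2)) i l hmax hpos.le
        rw [h0] at this
        have h1 := (min_facts (hUn (n + 1) i l)).1
        nlinarith
      · have hMm : Mop c (U n) i l ≤ Mop c (U (n + 1)) i l := Mop_mono hd c ih i l
        have h2 := (min_facts (hUn (n + 1) i l)).2.1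
        linarith
  -- the bound on supNorm
  have hbound : ∀ n : ℕ, supNorm (U n) ≤ K := by
    intro n
    refine ciSup_le fun p => abs_le.mpr ⟨?_, hupper n p.1 p.2⟩
    calc -K ≤ U 0 p.1 p.2 := hlower0 p.1 p.2
    _ ≤ U n p.1 p.2 := by
        induction n with
        | zero => exact le_rfl
        | succ m ihm => exact le_trans ihm (hmono m p.1 p.2)
  -- the limit
  have hle_n : ∀ m n, m ≤ n → ∀ i l, U m i l ≤ U n i l := by
    intro m n hmn i l
    induction n with
    | zero => simp_all
    | succ k ihk =>
      rcases Nat.lt_or_ge m (k + 1) with h | h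
      · exact le_trans (ihk (by omega)) (hmono k i l)
      · have : m = k + 1 := by omega
        simp [this]
  set w : Fin d → Fin N → ℝ := fun i l => ⨆ n, U n i l with hw
  have hbdd : ∀ i l, BddAbove (Set.range fun n => U n i l) := by
    intro i l
    exact ⟨K, by rintro x ⟨n, rfl⟩; exact hupper n i l⟩
  have hmonoseq : ∀ i l, Monotone (fun n => U n i l) :=
    fun i l => monotone_nat_of_le_succ (fun n => hmono n i l)
  have htend : ∀ i l, Tendsto (fun n => U n i l) atTop (nhds (w i l)) :=
    fun i l => tendsto_atTop_ciSup (hmonoseq i l) (hbdd i l)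
  have hUlew : ∀ n i l, U n i l ≤ w i l :=
    fun n i l => le_ciSup (hbdd i l) n
  -- convergence of Mop
  have hMoptend : ∀ i l, Tendsto (fun n => Mop c (U n) i l) atTop (nhds (Mop c w i l)) := by
    intro i l
    have hm : Monotone (fun n => Mop c (U n) i l) :=
      monotone_nat_of_le_succ (fun n => Mop_mono hd c (fun j k => hmono n j k) i l)
    have hb : BddAbove (Set.range fun n => Mop c (U n) i l) :=
      ⟨Mop c w i l, by rintro x ⟨n, rfl⟩; exact Mop_mono hd c (fun j k => hUlew n j k) i l⟩
    have heq : (⨆ n, Mop c (U n) i l) = Mop c w i l := by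
      apply le_antisymm
      · exact ciSup_le fun n => Mop_mono hd c (fun j k => hUlew n j k) i l
      · refine Mop_le hd c w i l fun j hj => ?_
        have : w j l ≤ (⨆ n, Mop c (U n) i l) + c := by
          refine ciSup_le fun n => ?_
          have h1 : U n j l - c ≤ Mop c (U n) i l := le_Mop c (U n) hj l
          have h2 : Mop c (U n) i l ≤ ⨆ n, Mop c (U n) i l := le_ciSup hb n
          linarith
        linarith
    exact heq ▸ tendsto_atTop_ciSup hm hb
  -- convergence of F
  have hFev : ∀ i l, Continuous (fun v : Fin d → Fin N → ℝ => F v i l) :=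
    fun i l => (continuous_apply l).comp ((continuous_apply i).comp hFcont)
  have hUtend : Tendsto U atTop (nhds w) :=
    tendsto_pi_nhds.2 fun i => tendsto_pi_nhds.2 fun l => htend i l
  have hFtend : ∀ i l, Tendsto (fun n => F (U n) i l) atTop (nhds (F w i l)) :=
    fun i l => ((hFev i l).tendsto w).comp hUtend
  have hFtend1 : ∀ i l, Tendsto (fun n => F (U (n + 1)) i l) atTop (nhds (F w i l)) :=
    fun i l => (Filter.tendsto_add_atTop_iff_nat 1).2 (hFtend i l)
  have htend1 : ∀ i l, Tendsto (fun n => U (n + 1) i l) atTop (nhds (w i l)) :=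
    fun i l => (Filter.tendsto_add_atTop_iff_nat 1).2 (htend i l)
  -- w solves the QVI
  have hwQVI : ∀ i l, min (F w i l) (w i l - Mop c w i l) = 0 := by
    intro i l
    have hFw0 : 0 ≤ F w i l :=
      ge_of_tendsto' (hFtend1 i l) fun n => (min_facts (hUn n i l)).1
    have hwM : Mop c w i l ≤ w i l :=
      le_of_tendsto_of_tendsto' (hMoptend i l) (htend1 i l) fun n => by
        linarith [(min_facts (hUn n i l)).2.1]
    have hone : F w i l = 0 ∨ w i l = Mop c w i l := by
      by_cases hev : ∀ᶠ n in atTop, U (n + 1) i l = Mop c (U n) i l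
      · right
        exact tendsto_nhds_unique ((htend1 i l).congr' hev) (hMoptend i l)
      · left
        have hfr : ∃ᶠ n in atTop, ¬ U (n + 1) i l = Mop c (U n) i l :=
          Filter.not_eventually.mp hev
        have hfr0 : ∃ᶠ n in atTop, F (U (n + 1)) i l = 0 := by
          refine hfr.mono fun n hn => ?_
          rcases (min_facts (hUn n i l)).2.2 with h | h
          · exact h
          · exact absurd (by linarith : U (n + 1) i l = Mop c (U n) i l) hn
        by_contra hne
        have hevne : ∀ᶠ n in atTop, F (U (n + 1)) i l ≠ 0 :=
          (hFtend1 i l).eventually_ne hne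
        obtain ⟨n, hn1, hn2⟩ := (hfr0.and_eventually hevne).exists
        exact hn2 hn1
    rcases hone with h | h
    · rw [h]; exact min_eq_left (by linarith)
    · have h2 : w i l - Mop c w i l = 0 := by linarith
      rw [h2]; exact min_eq_right hFw0
  -- w = u by the QVI comparison principle
  have hwu : w = u := by
    funext i l
    exact le_antisymm (qvi_comp hN hd γ hγ F hFmono c hc w u hwQVI hu i l)
      (qvi_comp hN hd γ hγ F hFmono c hc u w hu hwQVI i l)
  exact ⟨hbound, hmono, fun i l => hwu ▸ htend i l⟩
end
end

section
/- Properties of the penalized iteration operator Q^ρ: let ρ ≥ 0 and c ≥ 0. (1) If U, V ∈ ℝ^{N×d} satisfy F_i(U)_l − ρ·Σ_{j≠i} π(u^j_l − c − U^i_l) = 0 and F_i(V)_l − ρ·Σ_{j≠i} π(v^j_l − c − V^i_l) = 0 for all i ∈ I, l ∈ {1,…,N}, then U − V ≤ ‖(u − v)^+‖ componentwise, where (u−v)^+ is the componentwise positive part; in particular U ≥ V whenever u ≥ v, and ‖U − V‖ ≤ ‖u − v‖. (2) If U satisfies the equation with input u, then ‖U‖ ≤ max(‖F(0)‖/γ,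 ‖u‖). (3) The penalized iteration (u^{ρ,n})_{n≥0} is componentwise nondecreasing in n and converges componentwise as n → ∞ to the unique solution u^ρ of the penalized equation with penalty parameter ρ and switching cost c. -/
open Filter Topology

noncomputable section

section Aux

variable {N d : ℕ}

lemma abs_le_supNorm (u : Fin d → Fin N → ℝ) (i : Fin d) (l : Fin N) :
    |u i l| ≤ supNorm u := by
  unfold supNorm
  exact le_ciSup (f := fun p : Fin d × Fin N => |u p.1 p.2|)
    (Set.Finite.bddAbove (Set.finite_range _)) (i, l)

lemma supNorm_nonneg' [NeZero N] [NeZero d] (u : Fin d → Fin N → ℝ) : 0 ≤ supNorm u :=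
  (abs_nonneg _).trans (abs_le_supNorm u ⟨0, Nat.pos_of_ne_zero (NeZero.ne d)⟩
    ⟨0, Nat.pos_of_ne_zero (NeZero.ne N)⟩)

lemma supNorm_le' [NeZero N] [NeZero d] {u : Fin d → Fin N → ℝ} {a : ℝ}
    (h : ∀ i l, |u i l| ≤ a) : supNorm u ≤ a := by
  haveI : Nonempty (Fin d × Fin N) :=
    ⟨(⟨0, Nat.pos_of_ne_zero (NeZero.ne d)⟩, ⟨0, Nat.pos_of_ne_zero (NeZero.ne N)⟩)⟩
  exact ciSup_le fun p => h p.1 p.2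

/-- Maximum principle for monotone systems. -/
lemma maxPrinciple [NeZero N] [NeZero d] {γ : ℝ} (hγ : 0 < γ)
    {F : (Fin d → Fin N → ℝ) → Fin d → Fin N → ℝ} (hFmono : IsMonotoneSystem γ F)
    (U V : Fin d → Fin N → ℝ) (M : ℝ) (hM : 0 ≤ M)
    (h : ∀ i l, (∀ (j : Fin d) (k : Fin N), U j k - V j k ≤ U i l - V i l) →
      M < U i l - V i l → F U i l - F V i l ≤ γ * M) :
    ∀ i l, U i l - V i l ≤ M := by
  obtain ⟨p0, hp0⟩ := Finite.exists_max (fun p : Fin d × Fin N => U p.1 p.2 - V p.1 p.2)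
  intro i l
  have hle : U i l - V i l ≤ U p0.1 p0.2 - V p0.1 p0.2 := hp0 (i, l)
  by_contra hcon
  push_neg at hcon
  have hm : M < U p0.1 p0.2 - V p0.1 p0.2 := lt_of_lt_of_le hcon hle
  have h1 := hFmono U V p0.1 p0.2 (fun j k => hp0 (j, k)) (hM.trans hm.le)
  have h2 := h p0.1 p0.2 (fun j k => hp0 (j, k)) hm
  nlinarith

end Aux

/-- Properties of the penalized iteration operator `Q^ρ`: one-sided Lipschitz bound
(hence monotonicity and nonexpansiveness), a priori bound, and monotone convergence
of the penalized iteration to the unique solution of the penalized equation. -/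
theorem penalized_iteration_properties {N d : ℕ} (hN : 1 ≤ N) (hd : 2 ≤ d)
    (γ : ℝ) (hγ : 0 < γ)
    (F : (Fin d → Fin N → ℝ) → Fin d → Fin N → ℝ)
    (hFcont : Continuous F) (hFmono : IsMonotoneSystem γ F)
    (π : ℝ → ℝ) (hπ : IsPenaltyFunction π)
    (ρ : ℝ) (hρ : 0 ≤ ρ) (c : ℝ) (hc : 0 ≤ c) :
    -- (1) one-sided bound, monotonicity, nonexpansiveness
    (∀ u v U V : Fin d → Fin N → ℝ,
      (∀ i l, F U i l - ρ * ∑ j ∈ Finset.univ.erase i, π (u j l - c - U i l) = 0) →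
      (∀ i l, F V i l - ρ * ∑ j ∈ Finset.univ.erase i, π (v j l - c - V i l) = 0) →
      (∀ i l, U i l - V i l ≤ ⨆ p : Fin d × Fin N, max (u p.1 p.2 - v p.1 p.2) 0) ∧
      ((∀ i l, v i l ≤ u i l) → ∀ i l, V i l ≤ U i l) ∧
      supNorm (fun i l => U i l - V i l) ≤ supNorm (fun i l => u i l - v i l)) ∧
    -- (2) a priori bound
    (∀ u U : Fin d → Fin N → ℝ,
      (∀ i l, F U i l - ρ * ∑ j ∈ Finset.univ.erase i, π (u j l - c - U i l) = 0) →
      supNorm U ≤ max (supNorm (F 0) / γ) (supNorm u)) ∧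
    -- (3) monotone convergence of the penalized iteration
    (∀ (Useq : ℕ → Fin d → Fin N → ℝ) (uρ : Fin d → Fin N → ℝ),
      (∀ i l, F (Useq 0) i l = 0) →
      (∀ n : ℕ, ∀ i l, F (Useq (n + 1)) i l -
        ρ * ∑ j ∈ Finset.univ.erase i, π (Useq n j l - c - Useq (n + 1) i l) = 0) →
      (∀ i l, F uρ i l - ρ * ∑ j ∈ Finset.univ.erase i, π (uρ j l - c - uρ i l) = 0) →
      (∀ n : ℕ, ∀ i l, Useq n i l ≤ Useq (n + 1) i l) ∧
      (∀ i l, Filter.Tendsto (fun n => Useq n i l) Filter.atTop (nhds (uρ i l)))) := by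
  haveI : NeZero N := ⟨by omega⟩
  haveI : NeZero d := ⟨by omega⟩
  obtain ⟨hπc, hπm, hπ0, hπpos⟩ := hπ
  have hπnn : ∀ y : ℝ, 0 ≤ π y := fun y => by
    rcases le_or_gt y 0 with h | h
    · exact (hπ0 y h).ge
    · exact (hπpos y h).le
  -- Part (1a): one-sided bound
  have part1 : ∀ u v U V : Fin d → Fin N → ℝ,
      (∀ i l, F U i l - ρ * ∑ j ∈ Finset.univ.erase i, π (u j l - c - U i l) = 0) →
      (∀ i l, F V i l - ρ * ∑ j ∈ Finset.univ.erase i, π (v j l - c - V i l) = 0) →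
      (∀ i l, U i l - V i l ≤ ⨆ p : Fin d × Fin N, max (u p.1 p.2 - v p.1 p.2) 0) := by
    intro u v U V hU hV
    set M := ⨆ p : Fin d × Fin N, max (u p.1 p.2 - v p.1 p.2) 0 with hMdef
    have hbdd : BddAbove (Set.range fun p : Fin d × Fin N => max (u p.1 p.2 - v p.1 p.2) 0) :=
      Set.Finite.bddAbove (Set.finite_range _)
    have hMub : ∀ (j : Fin d) (k : Fin N), u j k - v j k ≤ M := fun j k =>
      (le_max_left _ _).trans (le_ciSup hbdd (j, k))
    have hM0 : 0 ≤ M := (le_max_right _ _).trans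
      (le_ciSup hbdd (⟨0, Nat.pos_of_ne_zero (NeZero.ne d)⟩,
        ⟨0, Nat.pos_of_ne_zero (NeZero.ne N)⟩))
    refine maxPrinciple hγ hFmono U V M hM0 ?_
    intro i l _ hlt
    have hU' : F U i l = ρ * ∑ j ∈ Finset.univ.erase i, π (u j l - c - U i l) :=
      sub_eq_zero.mp (hU i l)
    have hV' : F V i l = ρ * ∑ j ∈ Finset.univ.erase i, π (v j l - c - V i l) :=
      sub_eq_zero.mp (hV i l)
    have hterm : ∀ j ∈ Finset.univ.erase i,
        π (u j l - c - U i l) ≤ π (v j l - c - V i l) := by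
      intro j _
      apply hπm
      have := hMub j l
      linarith
    have hsum : ρ * ∑ j ∈ Finset.univ.erase i, π (u j l - c - U i l) ≤
        ρ * ∑ j ∈ Finset.univ.erase i, π (v j l - c - V i l) :=
      mul_le_mul_of_nonneg_left (Finset.sum_le_sum hterm) hρ
    have hMγ : 0 ≤ γ * M := mul_nonneg hγ.le hM0
    rw [hU', hV']
    linarith
  -- Part (1b): monotonicity
  have mono_of_le : ∀ u v U V : Fin d → Fin N → ℝ,
      (∀ i l, F U i l - ρ * ∑ j ∈ Finset.univ.erase i, π (u j l - c - U i l) = 0) →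
      (∀ i l, F V i l - ρ * ∑ j ∈ Finset.univ.erase i, π (v j l - c - V i l) = 0) →
      (∀ i l, v i l ≤ u i l) → ∀ i l, V i l ≤ U i l := by
    intro u v U V hU hV hvu i l
    have h := part1 v u V U hV hU i l
    have hz : (⨆ p : Fin d × Fin N, max (v p.1 p.2 - u p.1 p.2) 0) = 0 := by
      have he : (fun p : Fin d × Fin N => max (v p.1 p.2 - u p.1 p.2) 0) = fun _ => (0 : ℝ) :=
        funext fun p => max_eq_right (by linarith [hvu p.1 p.2])
      rw [he]; exact ciSup_const
    rw [hz] at h; linarith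
  refine ⟨?_, ?_, ?_⟩
  · -- (1)
    intro u v U V hU hV
    refine ⟨part1 u v U V hU hV, mono_of_le u v U V hU hV, ?_⟩
    have hb1 : (⨆ p : Fin d × Fin N, max (u p.1 p.2 - v p.1 p.2) 0) ≤
        supNorm (fun i l => u i l - v i l) := by
      refine ciSup_le fun p => max_le ?_ (supNorm_nonneg' _)
      exact (le_abs_self _).trans (abs_le_supNorm (fun i l => u i l - v i l) p.1 p.2)
    have hb2 : (⨆ p : Fin d × Fin N, max (v p.1 p.2 - u p.1 p.2) 0) ≤
        supNorm (fun i l => u i l - v i l) := by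
      refine ciSup_le fun p => max_le ?_ (supNorm_nonneg' _)
      have h : |u p.1 p.2 - v p.1 p.2| ≤ supNorm (fun i l => u i l - v i l) :=
        abs_le_supNorm (fun i l => u i l - v i l) p.1 p.2
      linarith [neg_le_abs (u p.1 p.2 - v p.1 p.2)]
    refine supNorm_le' fun i l => abs_sub_le_iff.mpr ⟨?_, ?_⟩
    · exact (part1 u v U V hU hV i l).trans hb1
    · exact (part1 v u V U hV hU i l).trans hb2
  · -- (2)
    intro u U hU
    set M := max (supNorm (F 0) / γ) (supNorm u) with hMdef
    have hF0 : 0 ≤ supNorm (F 0) := supNorm_nonneg' _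
    have hM0 : 0 ≤ M := le_trans (div_nonneg hF0 hγ.le) (le_max_left _ _)
    have hF0M : supNorm (F 0) ≤ γ * M := by
      have h1 : supNorm (F 0) / γ ≤ M := le_max_left _ _
      calc supNorm (F 0) = γ * (supNorm (F 0) / γ) := by field_simp
        _ ≤ γ * M := mul_le_mul_of_nonneg_left h1 hγ.le
    have hup : ∀ i l, U i l - (0 : Fin d → Fin N → ℝ) i l ≤ M := by
      refine maxPrinciple hγ hFmono U 0 M hM0 ?_
      intro i l _ hlt
      have hU' : F U i l = ρ * ∑ j ∈ Finset.univ.erase i, π (u j l - c - U i l) :=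
        sub_eq_zero.mp (hU i l)
      simp only [Pi.zero_apply, sub_zero] at hlt
      have hzero : ∀ j ∈ Finset.univ.erase i, π (u j l - c - U i l) = 0 := by
        intro j _
        apply hπ0
        have h1 : u j l ≤ supNorm u := (le_abs_self _).trans (abs_le_supNorm u j l)
        have h2 : supNorm u ≤ M := le_max_right _ _
        linarith
      have hFU : F U i l = 0 := by rw [hU', Finset.sum_eq_zero hzero, mul_zero]
      have hb : -F 0 i l ≤ supNorm (F 0) := (neg_le_abs _).trans (abs_le_supNorm (F 0) i l)
      linarith
    have hdown : ∀ i l, (0 : Fin d → Fin N → ℝ) i l - U i l ≤ M := by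
      refine maxPrinciple hγ hFmono 0 U M hM0 ?_
      intro i l _ _
      have hU' : F U i l = ρ * ∑ j ∈ Finset.univ.erase i, π (u j l - c - U i l) :=
        sub_eq_zero.mp (hU i l)
      have hpos : 0 ≤ ρ * ∑ j ∈ Finset.univ.erase i, π (u j l - c - U i l) :=
        mul_nonneg hρ (Finset.sum_nonneg fun j _ => hπnn _)
      have hb : F 0 i l ≤ supNorm (F 0) := (le_abs_self _).trans (abs_le_supNorm (F 0) i l)
      linarith
    refine supNorm_le' fun i l => abs_le.mpr ⟨?_, ?_⟩
    · have := hdown i l; simp only [Pi.zero_apply] at this; linarith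
    · have := hup i l; simp only [Pi.zero_apply] at this; linarith
  · -- (3)
    intro Useq uρ h0 hstep hρeq
    have mono : ∀ n : ℕ, ∀ i l, Useq n i l ≤ Useq (n + 1) i l := by
      intro n
      induction n with
      | zero =>
        have h01 : ∀ i l, Useq 0 i l - Useq 1 i l ≤ 0 := by
          refine maxPrinciple hγ hFmono _ _ 0 le_rfl ?_
          intro i l _ _
          have h1' : F (Useq 1) i l =
              ρ * ∑ j ∈ Finset.univ.erase i, π (Useq 0 j l - c - Useq 1 i l) :=
            sub_eq_zero.mp (hstep 0 i l)
          have hpos : 0 ≤ ρ * ∑ j ∈ Finset.univ.erase i, π (Useq 0 j l - c - Useq 1 i l) :=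
            mul_nonneg hρ (Finset.sum_nonneg fun j _ => hπnn _)
          rw [h0 i l, h1']
          linarith
        intro i l; linarith [h01 i l]
      | succ n ih =>
        exact mono_of_le (Useq (n + 1)) (Useq n) (Useq (n + 2)) (Useq (n + 1))
          (hstep (n + 1)) (hstep n) ih
    have hub : ∀ n : ℕ, ∀ i l, Useq n i l ≤ uρ i l := by
      intro n
      induction n with
      | zero =>
        have h0u : ∀ i l, Useq 0 i l - uρ i l ≤ 0 := by
          refine maxPrinciple hγ hFmono _ _ 0 le_rfl ?_
          intro i l _ _
          have h1' : F uρ i l =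
              ρ * ∑ j ∈ Finset.univ.erase i, π (uρ j l - c - uρ i l) :=
            sub_eq_zero.mp (hρeq i l)
          have hpos : 0 ≤ ρ * ∑ j ∈ Finset.univ.erase i, π (uρ j l - c - uρ i l) :=
            mul_nonneg hρ (Finset.sum_nonneg fun j _ => hπnn _)
          rw [h0 i l, h1']
          linarith
        intro i l; linarith [h0u i l]
      | succ n ih =>
        exact mono_of_le uρ (Useq n) uρ (Useq (n + 1)) hρeq (hstep n) ih
    refine ⟨mono, ?_⟩
    set w : Fin d → Fin N → ℝ := fun i l => ⨆ n, Useq n i l with hwdef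
    have hmono' : ∀ i l, Monotone fun n => Useq n i l := fun i l =>
      monotone_nat_of_le_succ fun n => mono n i l
    have hbdd : ∀ i l, BddAbove (Set.range fun n => Useq n i l) := fun i l =>
      ⟨uρ i l, by rintro x ⟨n, rfl⟩; exact hub n i l⟩
    have htendw : ∀ i l, Filter.Tendsto (fun n => Useq n i l) Filter.atTop (nhds (w i l)) :=
      fun i l => tendsto_atTop_ciSup (hmono' i l) (hbdd i l)
    have hweq : ∀ i l, F w i l - ρ * ∑ j ∈ Finset.univ.erase i, π (w j l - c - w i l) = 0 := by
      intro i l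
      have htendW : Filter.Tendsto Useq Filter.atTop (nhds w) :=
        tendsto_pi_nhds.mpr fun i' => tendsto_pi_nhds.mpr fun l' => htendw i' l'
      have htendW1 : Filter.Tendsto (fun n => Useq (n + 1)) Filter.atTop (nhds w) :=
        (tendsto_add_atTop_iff_nat 1).mpr htendW
      have hcont : Continuous fun g : Fin d → Fin N → ℝ => F g i l :=
        (continuous_apply l).comp ((continuous_apply i).comp hFcont)
      have hFt : Filter.Tendsto (fun n => F (Useq (n + 1)) i l) Filter.atTop (nhds (F w i l)) :=
        (hcont.tendsto w).comp htendW1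
      have hPt : Filter.Tendsto
          (fun n => ρ * ∑ j ∈ Finset.univ.erase i, π (Useq n j l - c - Useq (n + 1) i l))
          Filter.atTop
          (nhds (ρ * ∑ j ∈ Finset.univ.erase i, π (w j l - c - w i l))) := by
        refine Filter.Tendsto.const_mul ρ (tendsto_finset_sum _ fun j _ => ?_)
        have h1 : Filter.Tendsto (fun n => Useq n j l - c - Useq (n + 1) i l) Filter.atTop
            (nhds (w j l - c - w i l)) :=
          (((htendw j l).sub_const c).sub ((tendsto_add_atTop_iff_nat 1).mpr (htendw i l)))
        exact (hπc.tendsto _).comp h1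
      have hall : Filter.Tendsto
          (fun n => F (Useq (n + 1)) i l -
            ρ * ∑ j ∈ Finset.univ.erase i, π (Useq n j l - c - Useq (n + 1) i l))
          Filter.atTop
          (nhds (F w i l - ρ * ∑ j ∈ Finset.univ.erase i, π (w j l - c - w i l))) :=
        hFt.sub hPt
      have hzero : (fun n => F (Useq (n + 1)) i l -
          ρ * ∑ j ∈ Finset.univ.erase i, π (Useq n j l - c - Useq (n + 1) i l)) =
          fun _ => (0 : ℝ) := funext fun n => hstep n i l
      rw [hzero] at hall
      exact (tendsto_nhds_unique hall tendsto_const_nhds).symm ▸ rfl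
    have h1 : ∀ i l, w i l - uρ i l ≤ 0 := by
      refine maxPrinciple hγ hFmono w uρ 0 le_rfl ?_
      intro i l hmax _
      rw [sub_eq_zero.mp (hweq i l), sub_eq_zero.mp (hρeq i l), mul_zero]
      have harg : ∀ j : Fin d, w j l - c - w i l ≤ uρ j l - c - uρ i l := fun j => by
        linarith [hmax j l]
      have hsum : (∑ j ∈ Finset.univ.erase i, π (w j l - c - w i l)) ≤
          ∑ j ∈ Finset.univ.erase i, π (uρ j l - c - uρ i l) :=
        Finset.sum_le_sum fun j _ => hπm (harg j)
      have := mul_le_mul_of_nonneg_left hsum hρ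
      linarith
    have h2 : ∀ i l, uρ i l - w i l ≤ 0 := by
      refine maxPrinciple hγ hFmono uρ w 0 le_rfl ?_
      intro i l hmax _
      rw [sub_eq_zero.mp (hweq i l), sub_eq_zero.mp (hρeq i l), mul_zero]
      have harg : ∀ j : Fin d, uρ j l - c - uρ i l ≤ w j l - c - w i l := fun j => by
        linarith [hmax j l]
      have hsum : (∑ j ∈ Finset.univ.erase i, π (uρ j l - c - uρ i l)) ≤
          ∑ j ∈ Finset.univ.erase i, π (w j l - c - w i l) :=
        Finset.sum_le_sum fun j _ => hπm (harg j)
      have := mul_le_mul_of_nonneg_left hsum hρ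
      linarith
    intro i l
    have hwu : w i l = uρ i l := le_antisymm (by linarith [h1 i l]) (by linarith [h2 i l])
    have := htendw i l
    rwa [hwu] at this
end
end
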